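/- For m = 12 and ζ = exp(2πi/12): f₁₂(6,6,4,8) = 4/3, f₁₂(6,6,2,10) = 4, f₁₂(4,8,3,9) = 3/2, f₁₂(4,8,2,10) = 3, f₁₂(3,9,2,10) = 2, and f₁₂(4,4,1,7) = 3, where f₁₂(k₁,k₂,k₃,k₄) = ((1−ζ^{k₁})(1−ζ^{k₂}))/((1−ζ^{k₃})(1−ζ^{k₄})). -/

import Mathlib

/-- ζ = exp(2πi/12). -/
noncomputable def zeta12 : ℂ := Complex.exp (2 * Real.pi * Complex.I / 12)

/-- f₁₂(k₁,k₂,k₃,k₄) = ((1−ζ^k₁)(1−ζ^k₂))/((1−ζ^k₃)(1−ζ^k₄)) with ζ = exp(2πi/12). -/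
noncomputable def f12 (k1 k2 k3 k4 : ℕ) : ℂ :=
  ((1 - zeta12 ^ k1) * (1 - zeta12 ^ k2)) / ((1 - zeta12 ^ k3) * (1 - zeta12 ^ k4))

lemma zeta12_primitive : IsPrimitiveRoot zeta12 12 := by
  have h := Complex.isPrimitiveRoot_exp 12 (by norm_num)
  convert h using 2
  simp [zeta12]

lemma zeta12_pow_ne_one {k : ℕ} (h0 : 0 < k) (h12 : k < 12) : zeta12 ^ k ≠ 1 :=
  zeta12_primitive.pow_ne_one_of_pos_of_lt (Nat.pos_iff_ne_zero.mp h0) h12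

lemma zeta12_sub_ne {k : ℕ} (h0 : 0 < k) (h12 : k < 12) : (1 : ℂ) - zeta12 ^ k ≠ 0 :=
  sub_ne_zero_of_ne (Ne.symm (zeta12_pow_ne_one h0 h12))

lemma zeta12_phi : zeta12 ^ 4 - zeta12 ^ 2 + 1 = 0 := by
  have h12 : zeta12 ^ 12 = 1 := zeta12_primitive.pow_eq_one
  have hfac : (zeta12 ^ 6 - 1) * ((zeta12 ^ 2 + 1) * (zeta12 ^ 4 - zeta12 ^ 2 + 1)) = 0 := by
    linear_combination h12
  have h6 : zeta12 ^ 6 - 1 ≠ 0 := sub_ne_zero_of_ne (zeta12_pow_ne_one (by norm_num) (by norm_num))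
  have h2 : zeta12 ^ 2 + 1 ≠ 0 := by
    intro h
    have h4 : zeta12 ^ 4 = 1 := by linear_combination (zeta12 ^ 2 - 1) * h
    exact zeta12_pow_ne_one (by norm_num) (by norm_num) h4
  rcases mul_eq_zero.mp hfac with h | h
  · exact absurd h h6
  rcases mul_eq_zero.mp h with h | h
  · exact absurd h h2
  · exact h

/-- The rational values of f₁₂ on selected quadruples of D₁₂:
f₁₂(6,6,4,8) = 4/3, f₁₂(6,6,2,10) = 4, f₁₂(4,8,3,9) = 3/2, f₁₂(4,8,2,10) = 3,
f₁₂(3,9,2,10) = 2, f₁₂(4,4,1,7) = 3. -/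
theorem f12_values :
    f12 6 6 4 8 = 4 / 3 ∧ f12 6 6 2 10 = 4 ∧ f12 4 8 3 9 = 3 / 2 ∧
      f12 4 8 2 10 = 3 ∧ f12 3 9 2 10 = 2 ∧ f12 4 4 1 7 = 3 := by
  have h := zeta12_phi
  set z := zeta12 with hz
  refine ⟨?_, ?_, ?_, ?_, ?_, ?_⟩
  · rw [f12, div_eq_iff (mul_ne_zero (zeta12_sub_ne (by norm_num) (by norm_num))
      (zeta12_sub_ne (by norm_num) (by norm_num)))]
    linear_combination (-(1:ℂ)/3 - z^2/3 + 4*z^4/3 - z^6/3 - z^8/3) * h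
  · rw [f12, div_eq_iff (mul_ne_zero (zeta12_sub_ne (by norm_num) (by norm_num))
      (zeta12_sub_ne (by norm_num) (by norm_num)))]
    linear_combination (-(3:ℂ) + z^2 + 4*z^4 + z^6 - 3*z^8) * h
  · rw [f12, div_eq_iff (mul_ne_zero (zeta12_sub_ne (by norm_num) (by norm_num))
      (zeta12_sub_ne (by norm_num) (by norm_num)))]
    linear_combination (-(1:ℂ)/2 - z^2/2 + 3*z^3/2 - z^4 + 3*z^5/2 - z^6/2 - z^8/2) * h
  · rw [f12, div_eq_iff (mul_ne_zero (zeta12_sub_ne (by norm_num) (by norm_num))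
      (zeta12_sub_ne (by norm_num) (by norm_num)))]
    linear_combination (-(2:ℂ) + z^2 + 2*z^4 + z^6 - 2*z^8) * h
  · rw [f12, div_eq_iff (mul_ne_zero (zeta12_sub_ne (by norm_num) (by norm_num))
      (zeta12_sub_ne (by norm_num) (by norm_num)))]
    linear_combination (-(1:ℂ) + z^2 - z^3 + 2*z^4 - z^5 + z^6 - z^8) * h
  · rw [f12, div_eq_iff (mul_ne_zero (zeta12_sub_ne (by norm_num) (by norm_num))
      (zeta12_sub_ne (by norm_num) (by norm_num)))]
    linear_combination (-(2:ℂ) + 3*z - 2*z^2 + 3*z^3 - 2*z^4) * h
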